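/- arXiv:1011.6471 — 2 statements merged into one kernel-verified Lean document; each statement's English description precedes it below -/
import Mathlib

section
/- If f is uniformly continuous and piecewise convex on an interval I_{a,b} of ℝ, then f is absolutely continuous on I_{a,b}. -/
def AbsolutelyContinuousOn (f : ℝ → ℝ) (I : Set ℝ) : Prop :=
  ∀ ε > (0 : ℝ), ∃ δ > (0 : ℝ), ∀ (n : ℕ) (x y : Fin n → ℝ),
    (∀ i, x i ∈ I ∧ y i ∈ I ∧ x i < y i) →
    (∀ i j : Fin n, (i : ℕ) < (j : ℕ) → y i ≤ x j) →
    (∑ i, (y i - x i)) < δ →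
    (∑ i, |f (y i) - f (x i)|) < ε

/-- f is piecewise convex on I: there are finitely many partition points such that on the
initial piece, each middle piece, and the final piece (intersected with I), f is convex or
concave. -/
def PiecewiseConvexOn (f : ℝ → ℝ) (I : Set ℝ) : Prop :=
  ∃ (N : ℕ) (a : Fin (N + 1) → ℝ), StrictMono a ∧
    (ConvexOn ℝ (I ∩ Set.Iic (a 0)) f ∨ ConcaveOn ℝ (I ∩ Set.Iic (a 0)) f) ∧
    (∀ i : Fin N, ConvexOn ℝ (I ∩ Set.Icc (a i.castSucc) (a i.succ)) f ∨
      ConcaveOn ℝ (I ∩ Set.Icc (a i.castSucc) (a i.succ)) f) ∧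
    (ConvexOn ℝ (I ∩ Set.Ici (a (Fin.last N))) f ∨ ConcaveOn ℝ (I ∩ Set.Ici (a (Fin.last N))) f)

open Finset

lemma my_slope4 {J : Set ℝ} {f : ℝ → ℝ} (hf : ConvexOn ℝ J f)
    {u v w z : ℝ} (hu : u ∈ J) (hv : v ∈ J) (hw : w ∈ J) (hz : z ∈ J)
    (huv : u < v) (hwz : w < z) (huw : u ≤ w) (hvz : v ≤ z) :
    (f v - f u) / (v - u) ≤ (f z - f w) / (z - w) := by
  have huz : u < z := lt_of_lt_of_le huv hvz
  have h1 : (f v - f u) / (v - u) ≤ (f z - f u) / (z - u) :=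
    hf.secant_mono hu hv hz (ne_of_gt huv) (ne_of_gt huz) hvz
  have h2 : (f u - f z) / (u - z) ≤ (f w - f z) / (w - z) :=
    hf.secant_mono hz hu hw (ne_of_lt huz) (ne_of_lt hwz) huw
  have e1 : (f u - f z) / (u - z) = (f z - f u) / (z - u) := by
    rw [← neg_sub (f z) (f u), ← neg_sub z u, neg_div_neg_eq]
  have e2 : (f w - f z) / (w - z) = (f z - f w) / (z - w) := by
    rw [← neg_sub (f z) (f w), ← neg_sub z w, neg_div_neg_eq]
  rw [e1, e2] at h2
  linarith

lemma my_shift {J : Set ℝ} {f : ℝ → ℝ} (hf : ConvexOn ℝ J f)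
    {u v w z : ℝ} (hu : u ∈ J) (hv : v ∈ J) (hw : w ∈ J) (hz : z ∈ J)
    (huv : u ≤ v) (huw : u ≤ w) (heq : v - u = z - w) :
    f v - f u ≤ f z - f w := by
  rcases eq_or_lt_of_le huv with rfl | huv
  · have : w = z := by linarith
    subst this; simp
  · have hwz : w < z := by linarith
    have hvz : v ≤ z := by linarith
    have h := my_slope4 hf hu hv hw hz huv hwz huw hvz
    have hvu : (0:ℝ) < v - u := by linarith
    have hzw : (0:ℝ) < z - w := by linarith
    rw [div_le_div_iff₀ hvu hzw, ← heq] at h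
    exact le_of_mul_le_mul_right h hvu

lemma core_right {J : Set ℝ} (hJ : Convex ℝ J) {f : ℝ → ℝ} (hf : ConvexOn ℝ J f)
    (x y : ℕ → ℝ) (s : Finset ℕ)
    (hxy : ∀ i ∈ s, x i ≤ y i) (hmem : ∀ i ∈ s, x i ∈ J ∧ y i ∈ J)
    (hord : ∀ i ∈ s, ∀ j ∈ s, i < j → y i ≤ x j)
    (Y : ℝ) (hY : Y ∈ J) (hYt : ∀ i ∈ s, y i ≤ Y) :
    Y - ∑ i ∈ s, (y i - x i) ∈ J ∧
      ∑ i ∈ s, (f (y i) - f (x i)) ≤ f Y - f (Y - ∑ i ∈ s, (y i - x i)) := by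
  induction s using Finset.strongInduction generalizing Y with
  | _ s ih =>
  rcases s.eq_empty_or_nonempty with rfl | hne
  · simpa using hY
  · have hms : s.max' hne ∈ s := s.max'_mem hne
    set m := s.max' hne with hmdef
    have hxym := hxy m hms
    obtain ⟨hxm, hym⟩ := hmem m hms
    have hymY := hYt m hms
    have hY'J : Y - (y m - x m) ∈ J :=
      hJ.ordConnected.out hxm hY ⟨by linarith, by linarith⟩
    have key : ∀ i ∈ s.erase m, i < m := fun i hi =>
      lt_of_le_of_ne (s.le_max' i (Finset.mem_of_mem_erase hi)) (Finset.ne_of_mem_erase hi)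
    obtain ⟨ihmem, ihle⟩ := ih (s.erase m) (Finset.erase_ssubset hms)
      (fun i hi => hxy i (Finset.mem_of_mem_erase hi))
      (fun i hi => hmem i (Finset.mem_of_mem_erase hi))
      (fun i hi j hj hij =>
        hord i (Finset.mem_of_mem_erase hi) j (Finset.mem_of_mem_erase hj) hij)
      (Y - (y m - x m)) hY'J
      (fun i hi => le_trans (hord i (Finset.mem_of_mem_erase hi) m hms (key i hi))
        (by linarith))
    have hsum1 : ∑ i ∈ s, (y i - x i) = (∑ i ∈ s.erase m, (y i - x i)) + (y m - x m) :=
      (Finset.sum_erase_add s _ hms).symm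
    have hsum2 : ∑ i ∈ s, (f (y i) - f (x i))
        = (∑ i ∈ s.erase m, (f (y i) - f (x i))) + (f (y m) - f (x m)) :=
      (Finset.sum_erase_add s _ hms).symm
    have heq2 : Y - (y m - x m) - ∑ i ∈ s.erase m, (y i - x i)
        = Y - ∑ i ∈ s, (y i - x i) := by rw [hsum1]; ring
    have hshift : f (y m) - f (x m) ≤ f Y - f (Y - (y m - x m)) :=
      my_shift hf hxm hym hY'J hY hxym (by linarith) (by ring)
    rw [heq2] at ihmem ihle
    exact ⟨ihmem, by rw [hsum2]; linarith⟩

lemma core_left {J : Set ℝ} (hJ : Convex ℝ J) {f : ℝ → ℝ} (hf : ConvexOn ℝ J f)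
    (x y : ℕ → ℝ) (s : Finset ℕ)
    (hxy : ∀ i ∈ s, x i ≤ y i) (hmem : ∀ i ∈ s, x i ∈ J ∧ y i ∈ J)
    (hord : ∀ i ∈ s, ∀ j ∈ s, i < j → y i ≤ x j)
    (X : ℝ) (hX : X ∈ J) (hXb : ∀ i ∈ s, X ≤ x i) :
    X + ∑ i ∈ s, (y i - x i) ∈ J ∧
      ∑ i ∈ s, (f (x i) - f (y i)) ≤ f X - f (X + ∑ i ∈ s, (y i - x i)) := by
  induction s using Finset.strongInduction generalizing X with
  | _ s ih =>
  rcases s.eq_empty_or_nonempty with rfl | hne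
  · simpa using hX
  · have hms : s.min' hne ∈ s := s.min'_mem hne
    set m := s.min' hne with hmdef
    have hxym := hxy m hms
    obtain ⟨hxm, hym⟩ := hmem m hms
    have hXxm := hXb m hms
    have hX'J : X + (y m - x m) ∈ J :=
      hJ.ordConnected.out hX hym ⟨by linarith, by linarith⟩
    have key : ∀ i ∈ s.erase m, m < i := fun i hi =>
      lt_of_le_of_ne (s.min'_le i (Finset.mem_of_mem_erase hi)) (Finset.ne_of_mem_erase hi).symm
    obtain ⟨ihmem, ihle⟩ := ih (s.erase m) (Finset.erase_ssubset hms)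
      (fun i hi => hxy i (Finset.mem_of_mem_erase hi))
      (fun i hi => hmem i (Finset.mem_of_mem_erase hi))
      (fun i hi j hj hij =>
        hord i (Finset.mem_of_mem_erase hi) j (Finset.mem_of_mem_erase hj) hij)
      (X + (y m - x m)) hX'J
      (fun i hi => le_trans (by linarith : X + (y m - x m) ≤ y m)
        (hord m hms i (Finset.mem_of_mem_erase hi) (key i hi)))
    have hsum1 : ∑ i ∈ s, (y i - x i) = (∑ i ∈ s.erase m, (y i - x i)) + (y m - x m) :=
      (Finset.sum_erase_add s _ hms).symm
    have hsum2 : ∑ i ∈ s, (f (x i) - f (y i))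
        = (∑ i ∈ s.erase m, (f (x i) - f (y i))) + (f (x m) - f (y m)) :=
      (Finset.sum_erase_add s _ hms).symm
    have heq2 : X + (y m - x m) + ∑ i ∈ s.erase m, (y i - x i)
        = X + ∑ i ∈ s, (y i - x i) := by rw [hsum1]; ring
    have hshift : f (X + (y m - x m)) - f X ≤ f (y m) - f (x m) :=
      my_shift hf hX hX'J hxm hym (by linarith) hXxm (by ring)
    rw [heq2] at ihmem ihle
    exact ⟨ihmem, by rw [hsum2]; linarith⟩

lemma pieceBound_convex {J : Set ℝ} (hJ : Convex ℝ J) {f : ℝ → ℝ} (hf : ConvexOn ℝ J f)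
    {ε δ : ℝ} (hε : 0 < ε)
    (huc : ∀ u ∈ J, ∀ v ∈ J, |u - v| < δ → |f u - f v| < ε)
    (n : ℕ) (x y : ℕ → ℝ)
    (hxy : ∀ i < n, x i ≤ y i)
    (hmem : ∀ i < n, x i < y i → x i ∈ J ∧ y i ∈ J)
    (hord : ∀ i j, i < j → j < n → y i ≤ x j)
    (hL : ∑ i ∈ range n, (y i - x i) < δ) :
    ∑ i ∈ range n, |f (y i) - f (x i)| < ε + ε := by
  classical
  set sP := (range n).filter (fun i => f (x i) < f (y i)) with hsP
  set sM := (range n).filter (fun i => f (y i) < f (x i)) with hsM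
  -- generic facts
  have hlt : ∀ {i}, i ∈ sP ∪ sM → x i < y i := by
    intro i hi
    have hin : i < n := by
      rcases Finset.mem_union.mp hi with h | h <;>
        exact mem_range.mp (Finset.mem_of_mem_filter i h)
    refine lt_of_le_of_ne (hxy i hin) (fun h => ?_)
    rcases Finset.mem_union.mp hi with h' | h' <;>
      · have := (Finset.mem_filter.mp h').2
        rw [h] at this
        exact lt_irrefl _ this
  have hlen_sub : ∀ s : Finset ℕ, s ⊆ range n → ∑ i ∈ s, (y i - x i) < δ := by
    intro s hs
    refine lt_of_le_of_lt (Finset.sum_le_sum_of_subset_of_nonneg hs ?_) hL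
    intro i hi _
    have := hxy i (mem_range.mp hi)
    linarith
  -- split the sum
  have hsplit : ∑ i ∈ range n, |f (y i) - f (x i)|
      = (∑ i ∈ sP, (f (y i) - f (x i))) + (∑ i ∈ sM, (f (x i) - f (y i))) := by
    rw [← Finset.sum_filter_add_sum_filter_not (range n) (fun i => f (x i) < f (y i))]
    congr 1
    · exact Finset.sum_congr rfl fun i hi => abs_of_pos (by
        have := (Finset.mem_filter.mp hi).2; linarith)
    · rw [show (∑ i ∈ (range n).filter (fun i => ¬ f (x i) < f (y i)), |f (y i) - f (x i)|)
          = ∑ i ∈ (range n).filter (fun i => ¬ f (x i) < f (y i)), (f (x i) - f (y i)) from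
        Finset.sum_congr rfl fun i hi => by
          have := not_lt.mp (Finset.mem_filter.mp hi).2
          rw [abs_of_nonpos (by linarith)]; ring]
      refine (Finset.sum_subset ?_ ?_).symm
      · intro i hi
        have h1 := Finset.mem_filter.mp hi
        exact Finset.mem_filter.mpr ⟨h1.1, not_lt.mpr (le_of_lt h1.2)⟩
      · intro i hi hni
        have h1 := not_lt.mp (Finset.mem_filter.mp hi).2
        have h2 : ¬ f (y i) < f (x i) := fun h =>
          hni (Finset.mem_filter.mpr ⟨(Finset.mem_filter.mp hi).1, h⟩)
        have := not_lt.mp h2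
        linarith
  -- bound the positive part
  have hboundP : ∑ i ∈ sP, (f (y i) - f (x i)) < ε := by
    rcases sP.eq_empty_or_nonempty with hP | hP
    · rw [hP]; simpa using hε
    · set m := sP.max' hP with hm
      have hmP : m ∈ sP := sP.max'_mem hP
      have hmlt : x m < y m := hlt (Finset.mem_union_left _ hmP)
      have hmn : m < n := mem_range.mp (Finset.mem_of_mem_filter m hmP)
      have hYJ : y m ∈ J := (hmem m hmn hmlt).2
      obtain ⟨hmemL, hle⟩ := core_right hJ hf x y sP
        (fun i hi => hxy i (mem_range.mp (Finset.mem_of_mem_filter i hi)))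
        (fun i hi => hmem i (mem_range.mp (Finset.mem_of_mem_filter i hi))
          (hlt (Finset.mem_union_left _ hi)))
        (fun i hi j hj hij => hord i j hij (mem_range.mp (Finset.mem_of_mem_filter j hj)))
        (y m) hYJ
        (fun i hi => by
          rcases eq_or_lt_of_le (sP.le_max' i hi) with h | h
          · rw [← hm] at h; rw [h]
          · exact le_trans (hord i m h hmn) (le_of_lt hmlt))
      set L := ∑ i ∈ sP, (y i - x i) with hLdef
      have hL0 : 0 ≤ L := Finset.sum_nonneg fun i hi =>
        sub_nonneg.mpr (hxy i (mem_range.mp (Finset.mem_of_mem_filter i hi)))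
      have hLδ : L < δ := hlen_sub sP (Finset.filter_subset _ _)
      have habs : |y m - (y m - L)| < δ := by
        rw [show y m - (y m - L) = L by ring, abs_of_nonneg hL0]; exact hLδ
      have := huc (y m) hYJ (y m - L) hmemL habs
      calc ∑ i ∈ sP, (f (y i) - f (x i)) ≤ f (y m) - f (y m - L) := hle
        _ ≤ |f (y m) - f (y m - L)| := le_abs_self _
        _ < ε := this
  -- bound the negative part
  have hboundM : ∑ i ∈ sM, (f (x i) - f (y i)) < ε := by
    rcases sM.eq_empty_or_nonempty with hM | hM
    · rw [hM]; simpa using hε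
    · set m := sM.min' hM with hm
      have hmM : m ∈ sM := sM.min'_mem hM
      have hmlt : x m < y m := hlt (Finset.mem_union_right _ hmM)
      have hmn : m < n := mem_range.mp (Finset.mem_of_mem_filter m hmM)
      have hXJ : x m ∈ J := (hmem m hmn hmlt).1
      obtain ⟨hmemL, hle⟩ := core_left hJ hf x y sM
        (fun i hi => hxy i (mem_range.mp (Finset.mem_of_mem_filter i hi)))
        (fun i hi => hmem i (mem_range.mp (Finset.mem_of_mem_filter i hi))
          (hlt (Finset.mem_union_right _ hi)))
        (fun i hi j hj hij => hord i j hij (mem_range.mp (Finset.mem_of_mem_filter j hj)))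
        (x m) hXJ
        (fun i hi => by
          rcases eq_or_lt_of_le (sM.min'_le i hi) with h | h
          · rw [← hm] at h; rw [← h]
          · exact le_trans (le_of_lt hmlt) (hord m i h
              (mem_range.mp (Finset.mem_of_mem_filter i hi))))
      set L := ∑ i ∈ sM, (y i - x i) with hLdef
      have hL0 : 0 ≤ L := Finset.sum_nonneg fun i hi =>
        sub_nonneg.mpr (hxy i (mem_range.mp (Finset.mem_of_mem_filter i hi)))
      have hLδ : L < δ := hlen_sub sM (Finset.filter_subset _ _)
      have habs : |x m - (x m + L)| < δ := by
        rw [show x m - (x m + L) = -L by ring, abs_neg, abs_of_nonneg hL0]; exact hLδ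
      have := huc (x m) hXJ (x m + L) hmemL habs
      calc ∑ i ∈ sM, (f (x i) - f (y i)) ≤ f (x m) - f (x m + L) := hle
        _ ≤ |f (x m) - f (x m + L)| := le_abs_self _
        _ < ε := this
  rw [hsplit]; linarith

lemma pieceBound {J : Set ℝ} (hJ : Convex ℝ J) {f : ℝ → ℝ}
    (hf : ConvexOn ℝ J f ∨ ConcaveOn ℝ J f)
    {ε δ : ℝ} (hε : 0 < ε)
    (huc : ∀ u ∈ J, ∀ v ∈ J, |u - v| < δ → |f u - f v| < ε)
    (n : ℕ) (x y : ℕ → ℝ)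
    (hxy : ∀ i < n, x i ≤ y i)
    (hmem : ∀ i < n, x i < y i → x i ∈ J ∧ y i ∈ J)
    (hord : ∀ i j, i < j → j < n → y i ≤ x j)
    (hL : ∑ i ∈ range n, (y i - x i) < δ) :
    ∑ i ∈ range n, |f (y i) - f (x i)| < ε + ε := by
  rcases hf with hf | hf
  · exact pieceBound_convex hJ hf hε huc n x y hxy hmem hord hL
  · have hnabs : ∀ u v : ℝ, |(-f) u - (-f) v| = |f u - f v| := by
      intro u v
      simp only [Pi.neg_apply, neg_sub_neg, abs_sub_comm]
    have h := pieceBound_convex hJ hf.neg hε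
      (fun u hu v hv hd => by rw [hnabs]; exact huc u hu v hv hd)
      n x y hxy hmem hord hL
    calc ∑ i ∈ range n, |f (y i) - f (x i)|
        = ∑ i ∈ range n, |(-f) (y i) - (-f) (x i)| :=
          Finset.sum_congr rfl fun i _ => (hnabs _ _).symm
      _ < ε + ε := h

theorem absolutelyContinuousOn_of_piecewiseConvex
    (I : Set ℝ) (hI : Convex ℝ I) (f : ℝ → ℝ)
    (hpc : PiecewiseConvexOn f I)
    (huc : ∀ ε > (0 : ℝ), ∃ δ > (0 : ℝ), ∀ x ∈ I, ∀ y ∈ I, |x - y| < δ → |f x - f y| < ε) :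
    AbsolutelyContinuousOn f I := by
  obtain ⟨N, a, haSM, hfirst, hmid, hlast⟩ := hpc
  intro ε hε
  have h25 : (0:ℝ) < 2 * N + 5 := by positivity
  set ε' := ε / (2 * N + 5) with hε'def
  have hε' : 0 < ε' := by positivity
  obtain ⟨δ, hδpos, hδ⟩ := huc ε' hε'
  refine ⟨δ, hδpos, ?_⟩
  intro n xx yy hmemI hsep hlen
  set x : ℕ → ℝ := fun i => if h : i < n then xx ⟨i, h⟩ else 0 with hxdef
  set y : ℕ → ℝ := fun i => if h : i < n then yy ⟨i, h⟩ else 0 with hydef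
  have hxv : ∀ (i : ℕ) (h : i < n), x i = xx ⟨i, h⟩ := fun i h => by
    simp only [hxdef]; exact dif_pos h
  have hyv : ∀ (i : ℕ) (h : i < n), y i = yy ⟨i, h⟩ := fun i h => by
    simp only [hydef]; exact dif_pos h
  have hprop : ∀ i < n, x i ∈ I ∧ y i ∈ I ∧ x i < y i := fun i h => by
    rw [hxv i h, hyv i h]; exact hmemI ⟨i, h⟩
  have hsep' : ∀ i j : ℕ, i < j → j < n → y i ≤ x j := fun i j hij hj => by
    rw [hxv j hj, hyv i (hij.trans hj)]
    exact hsep ⟨i, hij.trans hj⟩ ⟨j, hj⟩ hij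
  have hlen' : ∑ i ∈ range n, (y i - x i) < δ := by
    have e : ∑ i ∈ range n, (y i - x i) = ∑ i : Fin n, (yy i - xx i) := by
      rw [← Fin.sum_univ_eq_sum_range (fun i => y i - x i) n]
      refine Finset.sum_congr rfl fun i _ => ?_
      rw [hxv i.val i.isLt, hyv i.val i.isLt, Fin.eta]
    rw [e]; exact hlen
  have hgoal_eq : ∑ i : Fin n, |f (yy i) - f (xx i)|
      = ∑ i ∈ range n, |f (y i) - f (x i)| := by
    rw [← Fin.sum_univ_eq_sum_range (fun i => |f (y i) - f (x i)|) n]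
    refine Finset.sum_congr rfl fun i _ => ?_
    rw [hxv i.val i.isLt, hyv i.val i.isLt, Fin.eta]
  rw [hgoal_eq]
  -- partition points as a function on ℕ
  have hNlt : ∀ j : ℕ, min j N < N + 1 := fun j => by omega
  set a' : ℕ → ℝ := fun j => a ⟨min j N, hNlt j⟩ with ha'def
  have ha'mono : ∀ {j k : ℕ}, j ≤ k → a' j ≤ a' k := by
    intro j k h
    simp only [ha'def]
    exact haSM.monotone (by simp only [Fin.mk_le_mk]; omega)
  have ha'eq : ∀ (j : ℕ) (h : j ≤ N), a' j = a ⟨j, Nat.lt_succ_of_le h⟩ := fun j h => by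
    simp only [ha'def]
    exact congrArg a (Fin.ext (min_eq_left h))
  -- the clipped subdivision points
  set p : ℕ → ℕ → ℝ := fun i j =>
    if j = 0 then x i else if j ≤ N + 1 then max (x i) (min (y i) (a' (j-1))) else y i
    with hpdef
  have hp0 : ∀ i, p i 0 = x i := fun i => by simp only [hpdef]; norm_num
  have hpmid : ∀ i j, 1 ≤ j → j ≤ N + 1 →
      p i j = max (x i) (min (y i) (a' (j-1))) := fun i j h1 h2 => by
    simp only [hpdef]; rw [if_neg (by omega), if_pos h2]
  have hpend : ∀ i, p i (N+2) = y i := fun i => by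
    simp only [hpdef]; rw [if_neg (by omega), if_neg (by omega)]
  -- the pieces
  set Jp : ℕ → Set ℝ := fun j =>
    if j = 0 then I ∩ Set.Iic (a' 0) else if j ≤ N then I ∩ Set.Icc (a' (j-1)) (a' j)
    else I ∩ Set.Ici (a' N) with hJpdef
  have hJpsub : ∀ j, Jp j ⊆ I := fun j => by
    simp only [hJpdef]; split_ifs <;> exact Set.inter_subset_left
  have hJpconv : ∀ j, Convex ℝ (Jp j) := fun j => by
    simp only [hJpdef]; split_ifs
    exacts [hI.inter (convex_Iic _), hI.inter (convex_Icc _ _), hI.inter (convex_Ici _)]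
  have hJpf : ∀ j, ConvexOn ℝ (Jp j) f ∨ ConcaveOn ℝ (Jp j) f := by
    intro j
    simp only [hJpdef]
    split_ifs with h0 hN
    · have e : a' 0 = a 0 := by
        rw [ha'eq 0 (Nat.zero_le N)]; exact congrArg a (Fin.ext rfl)
      rw [e]; exact hfirst
    · have hj1 : 1 ≤ j := Nat.one_le_iff_ne_zero.mpr h0
      have e1 : a' (j-1) = a ((⟨j-1, by omega⟩ : Fin N)).castSucc := by
        rw [ha'eq (j-1) (by omega)]
        exact congrArg a (Fin.ext (by simp))
      have e2 : a' j = a ((⟨j-1, by omega⟩ : Fin N)).succ := by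
        rw [ha'eq j hN]
        exact congrArg a (Fin.ext (by simp; omega))
      rw [e1, e2]; exact hmid _
    · have e : a' N = a (Fin.last N) := by
        rw [ha'eq N (le_refl N)]; exact congrArg a (Fin.ext rfl)
      rw [e]; exact hlast
  -- basic bounds on p
  have hpmemuv : ∀ i < n, ∀ j, x i ≤ p i j ∧ p i j ≤ y i := by
    intro i hin j
    obtain ⟨hu, hv, huv⟩ := hprop i hin
    simp only [hpdef]
    split_ifs
    · exact ⟨le_refl _, le_of_lt huv⟩
    · exact ⟨le_max_left _ _, max_le (le_of_lt huv) (min_le_left _ _)⟩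
    · exact ⟨le_of_lt huv, le_refl _⟩
  have hpmono : ∀ i < n, ∀ j, j ≤ N + 1 → p i j ≤ p i (j+1) := by
    intro i hin j hj
    obtain ⟨hu, hv, huv⟩ := hprop i hin
    rcases Nat.eq_zero_or_pos j with rfl | hj1
    · rw [hp0, hpmid i 1 le_rfl (by omega)]
      exact le_max_left _ _
    · by_cases hjN : j ≤ N
      · rw [hpmid i j hj1 (by omega), hpmid i (j+1) (by omega) (by omega),
          Nat.add_sub_cancel]
        exact max_le_max le_rfl (min_le_min le_rfl (ha'mono (by omega)))
      · have hjE : j = N+1 := by omega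
        subst hjE
        rw [hpmid i (N+1) (by omega) le_rfl, show N+1+1 = N+2 from rfl, hpend]
        exact max_le (le_of_lt huv) (min_le_left _ _)
  -- membership of nondegenerate clips
  have hclip : ∀ i < n, ∀ j < N+2, p i j < p i (j+1) → p i j ∈ Jp j ∧ p i (j+1) ∈ Jp j := by
    intro i hin j hj hlt
    obtain ⟨hu, hv, huv⟩ := hprop i hin
    have hmemI' : ∀ t, x i ≤ t → t ≤ y i → t ∈ I := fun t h1 h2 =>
      hI.ordConnected.out hu hv ⟨h1, h2⟩
    by_cases h0 : j = 0
    · subst h0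
      have hJ0 : Jp 0 = I ∩ Set.Iic (a' 0) := by simp only [hJpdef]; norm_num
      rw [hp0, hpmid i 1 le_rfl (by omega), Nat.sub_self] at hlt ⊢
      rw [hJ0]
      have h1 : x i < min (y i) (a' 0) := by
        rcases lt_max_iff.mp hlt with h | h
        · exact absurd h (lt_irrefl _)
        · exact h
      have hmax : max (x i) (min (y i) (a' 0)) = min (y i) (a' 0) := max_eq_right h1.le
      constructor
      · exact ⟨hu, Set.mem_Iic.mpr (le_of_lt (lt_of_lt_of_le h1 (min_le_right _ _)))⟩
      · rw [hmax]
        exact ⟨hmemI' _ h1.le (min_le_left _ _), Set.mem_Iic.mpr (min_le_right _ _)⟩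
    · by_cases hN : j ≤ N
      · have hJm : Jp j = I ∩ Set.Icc (a' (j-1)) (a' j) := by
          simp only [hJpdef]; rw [if_neg h0, if_pos hN]
        rw [hpmid i j (by omega) (by omega), hpmid i (j+1) (by omega) (by omega),
          Nat.add_sub_cancel] at hlt ⊢
        rw [hJm]
        have hA : x i ≤ a' j := by
          by_contra h
          push_neg at h
          have e1 : max (x i) (min (y i) (a' (j-1))) = x i :=
            max_eq_left (le_trans (min_le_right _ _) (le_trans (ha'mono (Nat.sub_le j 1)) h.le))
          have e2 : max (x i) (min (y i) (a' j)) = x i :=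
            max_eq_left (le_trans (min_le_right _ _) h.le)
          rw [e1, e2] at hlt
          exact lt_irrefl _ hlt
        have hB : a' (j-1) ≤ y i := by
          by_contra h
          push_neg at h
          have e1 : max (x i) (min (y i) (a' (j-1))) = y i := by
            rw [min_eq_left h.le]; exact max_eq_right huv.le
          have e2 : max (x i) (min (y i) (a' j)) = y i := by
            rw [min_eq_left (le_trans h.le (ha'mono (Nat.sub_le j 1)))]
            exact max_eq_right huv.le
          rw [e1, e2] at hlt
          exact lt_irrefl _ hlt
        have hup : max (x i) (min (y i) (a' j)) ≤ a' j := max_le hA (min_le_right _ _)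
        have hlow : a' (j-1) ≤ max (x i) (min (y i) (a' (j-1))) :=
          le_trans (le_min hB le_rfl) (le_max_right _ _)
        constructor
        · exact ⟨hmemI' _ (le_max_left _ _) (max_le huv.le (min_le_left _ _)),
            Set.mem_Icc.mpr ⟨hlow, le_trans hlt.le hup⟩⟩
        · exact ⟨hmemI' _ (le_max_left _ _) (max_le huv.le (min_le_left _ _)),
            Set.mem_Icc.mpr ⟨le_trans hlow hlt.le, hup⟩⟩
      · have hjE : j = N+1 := by omega
        subst hjE
        have hJl : Jp (N+1) = I ∩ Set.Ici (a' N) := by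
          simp only [hJpdef]; rw [if_neg (by omega), if_neg (by omega)]
        rw [hpmid i (N+1) (by omega) le_rfl, Nat.add_sub_cancel,
          show N+1+1 = N+2 from rfl, hpend] at hlt ⊢
        rw [hJl]
        have hav : a' N < y i := by
          by_contra h
          push_neg at h
          rw [min_eq_left h, max_eq_right huv.le] at hlt
          exact lt_irrefl _ hlt
        rw [min_eq_right hav.le] at hlt ⊢
        constructor
        · exact ⟨hmemI' _ (le_max_left _ _) (max_le huv.le hav.le),
            Set.mem_Ici.mpr (le_max_right _ _)⟩
        · exact ⟨hv, Set.mem_Ici.mpr hav.le⟩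
  -- per-piece bound
  have hmain : ∀ j < N+2, ∑ i ∈ range n, |f (p i (j+1)) - f (p i j)| < ε' + ε' := by
    intro j hj
    refine pieceBound (hJpconv j) (hJpf j) hε'
      (fun u hu v hv hd => hδ u (hJpsub j hu) v (hJpsub j hv) hd)
      n (fun i => p i j) (fun i => p i (j+1)) ?_ ?_ ?_ ?_
    · exact fun i hin => hpmono i hin j (by omega)
    · exact fun i hin h => hclip i hin j hj h
    · intro i k hik hkn
      calc p i (j+1) ≤ y i := (hpmemuv i (hik.trans hkn) (j+1)).2
        _ ≤ x k := hsep' i k hik hkn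
        _ ≤ p k j := (hpmemuv k hkn j).1
    · refine lt_of_le_of_lt (Finset.sum_le_sum ?_) hlen'
      intro i hi
      have h1 := (hpmemuv i (mem_range.mp hi) j).1
      have h2 := (hpmemuv i (mem_range.mp hi) (j+1)).2
      linarith
  -- assemble
  have hfinal : ((N:ℝ)+2) * (ε' + ε') ≤ ε := by
    have he : ε' * (2*N+5) = ε := by
      rw [hε'def]; field_simp
    nlinarith [mul_nonneg (Nat.cast_nonneg N : (0:ℝ) ≤ N) hε'.le, hε'.le]
  calc ∑ i ∈ range n, |f (y i) - f (x i)|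
      ≤ ∑ i ∈ range n, ∑ j ∈ range (N+2), |f (p i (j+1)) - f (p i j)| := by
        refine Finset.sum_le_sum fun i hi => ?_
        have htele : f (y i) - f (x i)
            = ∑ j ∈ range (N+2), (f (p i (j+1)) - f (p i j)) := by
          rw [Finset.sum_range_sub (fun j => f (p i j)) (N+2), hp0, hpend]
        calc |f (y i) - f (x i)|
            = |∑ j ∈ range (N+2), (f (p i (j+1)) - f (p i j))| := by rw [htele]
          _ ≤ ∑ j ∈ range (N+2), |f (p i (j+1)) - f (p i j)| :=
              Finset.abs_sum_le_sum_abs _ _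
    _ = ∑ j ∈ range (N+2), ∑ i ∈ range n, |f (p i (j+1)) - f (p i j)| := Finset.sum_comm
    _ < ∑ _j ∈ range (N+2), (ε' + ε') :=
        Finset.sum_lt_sum_of_nonempty (nonempty_range_iff.mpr (by omega))
          (fun j hj => hmain j (mem_range.mp hj))
    _ = ((N:ℝ)+2) * (ε' + ε') := by
        rw [Finset.sum_const, card_range, nsmul_eq_mul]
        push_cast; ring
    _ ≤ ε := hfinal
end

section
/- Let f be monotone increasing and concave on an interval I, and let (x_1, y_1), ..., (x_n, y_n) be pairwise nonoverlapping subintervals of I with x_1 < x_2 < ... < x_n. Set σ_i = y_i − x_i and z_1 = x_1, z_{i+1} = x_1 + σ_1 + ... + σ_i. Then Σ_{i=1}^n (f(y_i) − f(x_i)) ≤ f(z_{n+1}) − f(z_1), provided all z_i ∈ I. -/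
lemma concave_shift_aux {I : Set ℝ} {f : ℝ → ℝ} (hconc : ConcaveOn ℝ I f)
    {a b t : ℝ} (hab : a ≤ b) (ht : 0 < t)
    (ha : a ∈ I) (hb : b ∈ I) (hat : a + t ∈ I) (hbt : b + t ∈ I) :
    f (b + t) - f b ≤ f (a + t) - f a := by
  rcases eq_or_lt_of_le hab with rfl | hab
  · linarith
  set d : ℝ := b - a + t with hd
  have hdpos : 0 < d := by simp [hd]; linarith
  set l : ℝ := t / d with hl
  have hl0 : 0 ≤ l := by positivity
  have hl1 : 0 ≤ 1 - l := by
    have : l ≤ 1 := by rw [hl]; rw [div_le_one hdpos]; linarith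
    linarith
  have hsum : l + (1 - l) = 1 := by ring
  have h1 := hconc.2 ha hbt hl0 hl1 hsum
  have h2 := hconc.2 ha hbt hl1 hl0 (by ring)
  have e1 : l • a + (1 - l) • (b + t) = b := by
    simp only [smul_eq_mul, hl]
    field_simp
    ring
  have e2 : (1 - l) • a + l • (b + t) = a + t := by
    simp only [smul_eq_mul, hl]
    field_simp
    ring
  rw [e1] at h1
  rw [e2] at h2
  simp only [smul_eq_mul] at h1 h2
  nlinarith

theorem sum_increments_le_glued (I : Set ℝ) (f : ℝ → ℝ) (n : ℕ) (hn : 0 < n)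
    (hmono : MonotoneOn f I) (hconc : ConcaveOn ℝ I f)
    (x y : Fin n → ℝ)
    (hmem : ∀ i, x i ∈ I ∧ y i ∈ I ∧ x i < y i)
    (hsep : ∀ i j : Fin n, (i : ℕ) < (j : ℕ) → y i ≤ x j)
    (z : Fin (n + 1) → ℝ)
    (hz : ∀ i : Fin (n + 1),
      z i = x ⟨0, hn⟩ + ∑ j ∈ Finset.univ.filter (fun j : Fin n => (j : ℕ) < (i : ℕ)),
        (y j - x j))
    (hzI : ∀ i, z i ∈ I) :
    ∑ i, (f (y i) - f (x i)) ≤ f (z (Fin.last n)) - f (z 0) := by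
  -- z step
  have hstep : ∀ k (hk : k < n),
      z ⟨k + 1, by omega⟩ = z ⟨k, by omega⟩ + (y ⟨k, hk⟩ - x ⟨k, hk⟩) := by
    intro k hk
    have hfil : (Finset.univ.filter (fun j : Fin n => (j : ℕ) < k + 1)) =
        insert ⟨k, hk⟩ (Finset.univ.filter (fun j : Fin n => (j : ℕ) < k)) := by
      ext j
      simp [Finset.mem_insert, Fin.ext_iff]
      omega
    have hnotmem : (⟨k, hk⟩ : Fin n) ∉
        (Finset.univ.filter (fun j : Fin n => (j : ℕ) < k)) := by
      simp
    rw [hz ⟨k + 1, by omega⟩, hz ⟨k, by omega⟩]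
    simp only [hfil, Finset.sum_insert hnotmem]
    ring
  -- z k ≤ x k
  have hzx : ∀ k (hk : k < n), z ⟨k, by omega⟩ ≤ x ⟨k, hk⟩ := by
    intro k
    induction k with
    | zero =>
      intro hk
      have := hz 0
      simp at this
      rw [show ((⟨0, by omega⟩ : Fin (n+1))) = 0 from rfl, this]
    | succ m ih =>
      intro hk
      have hm : m < n := by omega
      have h1 := hstep m hm
      have h2 := ih hm
      have h3 : y ⟨m, hm⟩ ≤ x ⟨m + 1, hk⟩ := hsep _ _ (by simp)
      linarith
  -- main induction
  have main : ∀ k (hk : k ≤ n),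
      ∑ i ∈ Finset.univ.filter (fun i : Fin n => (i : ℕ) < k), (f (y i) - f (x i)) ≤
        f (z ⟨k, by omega⟩) - f (z 0) := by
    intro k
    induction k with
    | zero =>
      intro hk
      have hfil : (Finset.univ.filter (fun j : Fin n => (j : ℕ) < 0)) = (∅ : Finset (Fin n)) := by
        simp
      rw [hfil]
      simp
    | succ m ih =>
      intro hk
      have hm : m < n := by omega
      have hfil : (Finset.univ.filter (fun j : Fin n => (j : ℕ) < m + 1)) =
          insert ⟨m, hm⟩ (Finset.univ.filter (fun j : Fin n => (j : ℕ) < m)) := by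
        ext j
        simp [Finset.mem_insert, Fin.ext_iff]
        omega
      have hnotmem : (⟨m, hm⟩ : Fin n) ∉
          (Finset.univ.filter (fun j : Fin n => (j : ℕ) < m)) := by
        simp
      rw [hfil, Finset.sum_insert hnotmem]
      have ihm := ih (by omega)
      obtain ⟨hxI, hyI, hxy⟩ := hmem ⟨m, hm⟩
      have ht : 0 < y ⟨m, hm⟩ - x ⟨m, hm⟩ := by linarith
      have hkey := concave_shift_aux hconc (hzx m hm) ht (hzI ⟨m, by omega⟩) hxI
        (by rw [← hstep m hm]; exact hzI _)
        (by rw [show x ⟨m, hm⟩ + (y ⟨m, hm⟩ - x ⟨m, hm⟩) = y ⟨m, hm⟩ by ring]; exact hyI)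
      rw [show x ⟨m, hm⟩ + (y ⟨m, hm⟩ - x ⟨m, hm⟩) = y ⟨m, hm⟩ by ring] at hkey
      rw [← hstep m hm] at hkey
      linarith
  have hfin := main n le_rfl
  have hfil : (Finset.univ.filter (fun j : Fin n => (j : ℕ) < n)) = Finset.univ := by
    ext j; simp [j.isLt]
  rw [hfil] at hfin
  convert hfin using 3
  rfl
end
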